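/- Consider the incremental optimization problem: for sessions t = 0,...,T, minimize (1/N^{(t)}) Σ_{k∈C^{(t)}} Σ_{i=1}^{n_k} (1/2)(ŵ_k^T m_{k,i} - 1)² subject to ‖m_{k,i}‖² ≤ 1, where the label sets C^{(t)} are disjoint with union [1,K] and ŵ_1,...,ŵ_K is a fixed simplex ETF for the whole label space. Then the session-wise global minimizers satisfy, jointly for all sessions: ‖m̂_{k,i}‖ = 1 and m̂_{k,i}^T ŵ_{k'} = K/(K-1)·δ_{k,k'} - 1/(K-1) for all k, k' ∈ [1,K] and all i. In particular, the optimality is independent of the class sizes n_k and session sizes, which may be imbalanced. -/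

import Mathlib

open scoped RealInnerProductSpace BigOperators

/-- Incremental optimization with a fixed simplex-ETF classifier: if in each
session `t` the features of the classes of that session minimize the averaged
dot-regression loss over the unit ball, then jointly over all sessions every
feature has unit norm and inner products `K/(K-1) δ_{k,k'} - 1/(K-1)` with all
prototypes — independently of the (possibly imbalanced) class/session sizes. -/
theorem incremental_dr_global_optimality (d K T : ℕ) (hK : 2 ≤ K)
    (w : Fin K → EuclideanSpace ℝ (Fin d))
    (hunit : ∀ j, ‖w j‖ = 1)
    (hpair : ∀ i j : Fin K, i ≠ j → ⟪w i, w j⟫ = -1 / (K - 1))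
    (C : Fin (T + 1) → Finset (Fin K))
    (hdisj : ∀ t t' : Fin (T + 1), t ≠ t' → Disjoint (C t) (C t'))
    (hcover : ∀ k : Fin K, ∃ t, k ∈ C t)
    (n : Fin K → ℕ)
    (m : (k : Fin K) → Fin (n k) → EuclideanSpace ℝ (Fin d))
    (hfeas : ∀ (t : Fin (T + 1)), ∀ k ∈ C t, ∀ i, ‖m k i‖ ^ 2 ≤ 1)
    (hmin : ∀ (t : Fin (T + 1)),
      ∀ m' : (k : Fin K) → Fin (n k) → EuclideanSpace ℝ (Fin d),
        (∀ k ∈ C t, ∀ i, ‖m' k i‖ ^ 2 ≤ 1) →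
        (1 / (∑ k ∈ C t, (n k : ℝ))) *
            ∑ k ∈ C t, ∑ i : Fin (n k), (1 / 2 : ℝ) * (⟪w k, m k i⟫ - 1) ^ 2 ≤
        (1 / (∑ k ∈ C t, (n k : ℝ))) *
            ∑ k ∈ C t, ∑ i : Fin (n k), (1 / 2 : ℝ) * (⟪w k, m' k i⟫ - 1) ^ 2) :
    ∀ (k : Fin K) (i : Fin (n k)),
      ‖m k i‖ = 1 ∧
      ∀ k' : Fin K, ⟪m k i, w k'⟫ =
        (K : ℝ) / (K - 1) * (if k = k' then 1 else 0) - 1 / (K - 1) := by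
  intro k i
  obtain ⟨t, hkt⟩ := hcover k
  -- the comparison features: class prototypes themselves
  have hfeas' : ∀ k' ∈ C t, ∀ i', ‖(fun (k : Fin K) (_ : Fin (n k)) => w k) k' i'‖ ^ 2 ≤ 1 := by
    intro k' _ i'
    simp [hunit k']
  have hle := hmin t (fun k _ => w k) hfeas'
  have hself : ∀ k' : Fin K, ⟪w k', w k'⟫ = (1 : ℝ) := by
    intro k'
    rw [real_inner_self_eq_norm_sq, hunit k']
    norm_num
  have hloss' : ∑ k' ∈ C t, ∑ i' : Fin (n k'),
      (1 / 2 : ℝ) * (⟪w k', (fun (k : Fin K) (_ : Fin (n k)) => w k) k' i'⟫ - 1) ^ 2 = 0 := by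
    apply Finset.sum_eq_zero
    intro k' _
    apply Finset.sum_eq_zero
    intro i' _
    simp [hself k', hunit k']
  rw [hloss', mul_zero] at hle
  -- positivity of total count
  have hS : (0 : ℝ) < ∑ k' ∈ C t, (n k' : ℝ) := by
    have h1 : (n k : ℝ) ≤ ∑ k' ∈ C t, (n k' : ℝ) :=
      Finset.single_le_sum (f := fun k' => (n k' : ℝ)) (fun _ _ => by positivity) hkt
    have h2 : 0 < n k := i.pos
    have h3 : (1 : ℝ) ≤ (n k : ℝ) := by exact_mod_cast h2
    linarith
  have hLnn : (0 : ℝ) ≤ ∑ k' ∈ C t, ∑ i' : Fin (n k'),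
      (1 / 2 : ℝ) * (⟪w k', m k' i'⟫ - 1) ^ 2 := by
    apply Finset.sum_nonneg
    intro k' _
    apply Finset.sum_nonneg
    intro i' _
    positivity
  have hL0 : ∑ k' ∈ C t, ∑ i' : Fin (n k'),
      (1 / 2 : ℝ) * (⟪w k', m k' i'⟫ - 1) ^ 2 = 0 := by
    have hinv : 0 < 1 / (∑ k' ∈ C t, (n k' : ℝ)) := by positivity
    nlinarith
  -- each term is zero
  have hterm : (1 / 2 : ℝ) * (⟪w k, m k i⟫ - 1) ^ 2 = 0 := by
    have houter := (Finset.sum_eq_zero_iff_of_nonneg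
      (fun k' _ => Finset.sum_nonneg fun i' _ => by positivity)).mp hL0 k hkt
    have hinner := (Finset.sum_eq_zero_iff_of_nonneg
      (fun i' _ => by positivity)).mp houter i (Finset.mem_univ i)
    exact hinner
  have hinner1 : ⟪w k, m k i⟫ = (1 : ℝ) := by
    have h2 : (⟪w k, m k i⟫ - 1) ^ 2 = 0 := by linarith
    have := pow_eq_zero_iff (n := 2) (by norm_num) |>.mp h2
    linarith
  -- unit norm
  have hcs : ⟪w k, m k i⟫ ≤ ‖w k‖ * ‖m k i‖ := real_inner_le_norm _ _
  rw [hunit k, one_mul, hinner1] at hcs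
  have hub : ‖m k i‖ ^ 2 ≤ 1 := hfeas t k hkt i
  have hnn : (0 : ℝ) ≤ ‖m k i‖ := norm_nonneg _
  have hnorm : ‖m k i‖ = 1 := by nlinarith
  -- equality case: m k i = w k
  have heq : w k = m k i :=
    (inner_eq_one_iff_of_norm_eq_one (hunit k) hnorm).mp hinner1
  refine ⟨hnorm, fun k' => ?_⟩
  rw [← heq]
  have hK1 : ((K : ℝ) - 1) ≠ 0 := by
    have : (2 : ℝ) ≤ (K : ℝ) := by exact_mod_cast hK
    linarith
  by_cases hkk : k = k'
  · subst hkk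
    rw [hself k, if_pos rfl]
    field_simp
  · rw [hpair k k' hkk, if_neg hkk]
    ring
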